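/- Let T > 0, κ ≠ 0 and φ ∈ ℝ, and let p₀, E₀, Λ₀ ∈ ℝ. Suppose Π, E : [0,T] → ℝ are differentiable and Λ : [0,T] → ℝ is continuous, with Π′(t) = 2φ·E(t), E′(t) = −Λ(t), E(0) = E₀, Λ(0) = Λ₀, and Π(t) + 2κ·Λ(t) = p₀ for all t ∈ [0,T] (i.e., the formed price is constantly equal to p₀). Then Λ is twice differentiable on [0,T] and satisfies κ·Λ″(t) = φ·Λ(t) for every t ∈ [0,T], with initial conditions Λ(0) = Λ₀ and Λ′(0) = −φ·E₀/κ. -/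

import Mathlib

/-- If the formed price is constant, Π + 2κΛ ≡ p₀, with Π′ = 2φE and
E′ = −Λ, then Λ is twice differentiable with κΛ″ = φΛ, Λ(0) = Λ₀ and
Λ′(0) = −φE₀/κ. (Here `Pi` plays the role of Π.) -/
theorem stmt_6 (T κ φ p₀ E₀ Λ₀ : ℝ) (hT : 0 < T) (hκ : κ ≠ 0)
    (Pi E Λ : ℝ → ℝ)
    (hPi : ∀ t ∈ Set.Icc (0:ℝ) T, HasDerivWithinAt Pi (2 * φ * E t) (Set.Icc (0:ℝ) T) t)
    (hE : ∀ t ∈ Set.Icc (0:ℝ) T, HasDerivWithinAt E (-Λ t) (Set.Icc (0:ℝ) T) t)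
    (hΛcont : ContinuousOn Λ (Set.Icc (0:ℝ) T))
    (hE0 : E 0 = E₀) (hΛ0 : Λ 0 = Λ₀)
    (hconst : ∀ t ∈ Set.Icc (0:ℝ) T, Pi t + 2 * κ * Λ t = p₀) :
    ∃ Λ' Λ'' : ℝ → ℝ,
      (∀ t ∈ Set.Icc (0:ℝ) T, HasDerivWithinAt Λ (Λ' t) (Set.Icc (0:ℝ) T) t) ∧
      (∀ t ∈ Set.Icc (0:ℝ) T, HasDerivWithinAt Λ' (Λ'' t) (Set.Icc (0:ℝ) T) t) ∧
      (∀ t ∈ Set.Icc (0:ℝ) T, κ * Λ'' t = φ * Λ t) ∧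
      Λ 0 = Λ₀ ∧ Λ' 0 = -(φ * E₀) / κ := by
  refine ⟨fun t => -(φ * E t) / κ, fun t => φ * Λ t / κ, ?_, ?_, ?_, hΛ0, by simp [hE0]⟩
  · intro t ht
    have hΛeq : ∀ s ∈ Set.Icc (0:ℝ) T, Λ s = (p₀ - Pi s) / (2 * κ) := by
      intro s hs
      have := hconst s hs
      field_simp
      linarith
    have h : HasDerivWithinAt (fun s => (p₀ - Pi s) / (2 * κ))
        (-(φ * E t) / κ) (Set.Icc (0:ℝ) T) t := by
      have := ((hPi t ht).const_sub p₀).div_const (2 * κ)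
      exact this.congr_deriv (by ring)
    exact h.congr hΛeq (hΛeq t ht)
  · intro t ht
    have := ((((hE t ht).const_mul φ).div_const κ)).neg
    have hf : (fun t => -(φ * E t) / κ) = -fun x => φ * E x / κ := by
      ext s; simp only [_root_.Pi.neg_apply]; ring
    rw [hf]
    exact this.congr_deriv (by ring)
  · intro t ht
    field_simp
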